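/- arXiv:1707.07470 — 2 statements merged into one kernel-verified Lean document; each statement's English description precedes it below -/
import Mathlib

section
/- Rough Gronwall Lemma: Let T > 0, I = [0,T], and let G : I → [0,∞). Assume there exist a regular control ω on I, constants L > 0 and κ > 0, and a superadditive map φ : Δ_I → ℝ such that G_t − G_s ≤ (sup_{s ≤ r ≤ t} G_r)·ω(s,t)^{1/κ} + φ(s,t) for every (s,t) ∈ Δ_I with ω(s,t) ≤ L. Then there exists a constant τ > 0, depending only on κ and L, such that sup_{0 ≤ t ≤ T} G_t ≤ 2·exp(ω(0,T)/τ)·[ G_0 + sup_{0 ≤ t ≤ T} ( |φ(0,t)|·exp(−ω(0,t)/τ) ) ]. -/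
open Set

/-- `ω` is a control on the interval `[0,T]`: a nonnegative superadditive
map on the simplex `Δ_I = {(s,t) : 0 ≤ s ≤ t ≤ T}`. -/
def IsControl (T : ℝ) (ω : ℝ → ℝ → ℝ) : Prop :=
  (∀ s t, 0 ≤ s → s ≤ t → t ≤ T → 0 ≤ ω s t) ∧
  (∀ s θ t, 0 ≤ s → s ≤ θ → θ ≤ t → t ≤ T → ω s θ + ω θ t ≤ ω s t)

/-- A regular control is a continuous control. -/
def IsRegularControl (T : ℝ) (ω : ℝ → ℝ → ℝ) : Prop :=
  IsControl T ω ∧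
    ContinuousOn (fun p : ℝ × ℝ => ω p.1 p.2)
      {p : ℝ × ℝ | 0 ≤ p.1 ∧ p.1 ≤ p.2 ∧ p.2 ≤ T}

/-- Fixed point lemma for suprema: if on `[s,t]` every value of `G` is bounded by
`A` plus `ε` times a running supremum, then all running suprema are at most
`A / (1-ε)`.  This handles the junk value of `sSup` for unbounded sets. -/
lemma sup_fix (G : ℝ → ℝ) (s t A ε : ℝ) (hst : s ≤ t)
    (hε0 : 0 ≤ ε) (hε1 : ε < 1) (hA : 0 ≤ A) (hGs : 0 ≤ G s)
    (hc : ∀ r, s ≤ r → r ≤ t → ∃ c, 0 ≤ c ∧ c ≤ ε ∧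
      G r ≤ A + sSup (G '' Icc s r) * c) :
    ∀ r, s ≤ r → r ≤ t → sSup (G '' Icc s r) ≤ A / (1 - ε) := by
  intro r hsr hrt
  have h1ε : (0:ℝ) < 1 - ε := by linarith
  by_cases hbdd : BddAbove (G '' Icc s r)
  · have hmem : G s ∈ G '' Icc s r := ⟨s, ⟨le_refl s, hsr⟩, rfl⟩
    have hne : (G '' Icc s r).Nonempty := ⟨_, hmem⟩
    have hM0 : 0 ≤ sSup (G '' Icc s r) := hGs.trans (le_csSup hbdd hmem)
    have hb : sSup (G '' Icc s r) ≤ A + sSup (G '' Icc s r) * ε := by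
      refine csSup_le hne ?_
      rintro y ⟨r', hr', rfl⟩
      obtain ⟨c, hc0, hcε, hGr'⟩ := hc r' hr'.1 (hr'.2.trans hrt)
      have hsub : G '' Icc s r' ⊆ G '' Icc s r :=
        image_mono (Icc_subset_Icc_right hr'.2)
      have hne' : (G '' Icc s r').Nonempty := ⟨G s, s, ⟨le_refl s, hr'.1⟩, rfl⟩
      have h2 : sSup (G '' Icc s r') ≤ sSup (G '' Icc s r) :=
        csSup_le_csSup hbdd hne' hsub
      have h3 : sSup (G '' Icc s r') * c ≤ sSup (G '' Icc s r) * ε :=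
        mul_le_mul h2 hcε hc0 hM0
      linarith
    rw [le_div_iff₀ h1ε]
    nlinarith [hb]
  · rw [Real.sSup_of_not_bddAbove hbdd]
    exact div_nonneg hA h1ε.le

/-- **Rough Gronwall Lemma.**  Given `κ, L > 0` there is a constant `τ > 0`,
depending only on `κ` and `L`, such that for every `T > 0`, every
`G : [0,T] → [0,∞)`, every regular control `ω`, and every superadditive
`φ : Δ_I → ℝ` satisfying
`G_t − G_s ≤ (sup_{s ≤ r ≤ t} G_r) · ω(s,t)^{1/κ} + φ(s,t)` whenever
`ω(s,t) ≤ L`, one has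
`sup_{0 ≤ t ≤ T} G_t ≤ 2·exp(ω(0,T)/τ)·[G_0 + sup_{0 ≤ t ≤ T}(|φ(0,t)|·exp(−ω(0,t)/τ))]`. -/
theorem rough_gronwall (κ L : ℝ) (hκ : 0 < κ) (hL : 0 < L) :
    ∃ τ : ℝ, 0 < τ ∧
      ∀ (T : ℝ), 0 < T →
      ∀ (G : ℝ → ℝ) (ω φ : ℝ → ℝ → ℝ),
        (∀ t, 0 ≤ t → t ≤ T → 0 ≤ G t) →
        IsRegularControl T ω →
        (∀ s θ t, 0 ≤ s → s ≤ θ → θ ≤ t → t ≤ T → φ s θ + φ θ t ≤ φ s t) →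
        (∀ s t, 0 ≤ s → s ≤ t → t ≤ T → ω s t ≤ L →
          G t - G s ≤ sSup (G '' Icc s t) * ω s t ^ (1 / κ) + φ s t) →
        ∀ S : ℝ,
          (∀ r, 0 ≤ r → r ≤ T → |φ 0 r| * Real.exp (-ω 0 r / τ) ≤ S) →
          ∀ t, 0 ≤ t → t ≤ T →
            G t ≤ 2 * Real.exp (ω 0 T / τ) * (G 0 + S) := by
  have h4pos : (0:ℝ) < (1/4 : ℝ) ^ κ := Real.rpow_pos_of_pos (by norm_num) κ
  set α : ℝ := min L ((1/4:ℝ) ^ κ) with hαdef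
  have hαpos : 0 < α := lt_min hL h4pos
  have hlog2 : (0:ℝ) < Real.log 2 := Real.log_pos (by norm_num)
  refine ⟨α / Real.log 2, div_pos hαpos hlog2, ?_⟩
  set τ : ℝ := α / Real.log 2 with hτdef
  have hτpos : 0 < τ := div_pos hαpos hlog2
  have hατ : α / τ = Real.log 2 := by
    rw [hτdef]
    field_simp
  have hexpα : Real.exp (α / τ) = 2 := by
    rw [hατ, Real.exp_log (by norm_num : (0:ℝ) < 2)]
  have hsmall : ∀ x : ℝ, 0 ≤ x → x ≤ α → x ^ (1/κ) ≤ 1/4 := by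
    intro x hx hxα
    have h1 : x ^ (1/κ) ≤ ((1/4:ℝ) ^ κ) ^ (1/κ) :=
      Real.rpow_le_rpow hx (hxα.trans (min_le_right _ _)) (by positivity)
    have h2 : ((1/4:ℝ) ^ κ) ^ (1/κ) = 1/4 := by
      rw [← Real.rpow_mul (by norm_num : (0:ℝ) ≤ 1/4), mul_one_div_cancel hκ.ne',
        Real.rpow_one]
    linarith
  intro T hT G ω φ hG hreg hφ hyp S hS
  obtain ⟨⟨hωnn, hωadd⟩, hωcont⟩ := hreg
  have hT0 : (0:ℝ) ≤ T := hT.le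
  have hG0 : 0 ≤ G 0 := hG 0 le_rfl hT0
  have hmono : ∀ x y, 0 ≤ x → x ≤ y → y ≤ T → ω 0 x ≤ ω 0 y := by
    intro x y hx hxy hyT
    have h1 := hωadd 0 x y le_rfl hx hxy hyT
    have h2 := hωnn x y hx hxy hyT
    linarith
  have hωsub : ∀ s u, 0 ≤ s → s ≤ u → u ≤ T → ω s u ≤ ω 0 u - ω 0 s := by
    intro s u hs hsu huT
    have h1 := hωadd 0 s u le_rfl hs hsu huT
    linarith
  have hω00 : ω 0 0 = 0 := by
    have h1 := hωadd 0 0 0 le_rfl le_rfl le_rfl hT0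
    have h2 := hωnn 0 0 le_rfl le_rfl hT0
    linarith
  have hS0 : 0 ≤ S := le_trans (by positivity) (hS 0 le_rfl hT0)
  have hdiv : ∀ a b : ℝ, a ≤ b → a / τ ≤ b / τ := by
    intro a b h
    gcongr
  have hφb : ∀ r, 0 ≤ r → r ≤ T → φ 0 r ≤ S * Real.exp (ω 0 r / τ) := by
    intro r hr hrT
    have h := hS r hr hrT
    rw [neg_div, Real.exp_neg] at h
    have hep : (0:ℝ) < Real.exp (ω 0 r / τ) := Real.exp_pos _
    have h2 : |φ 0 r| ≤ S * Real.exp (ω 0 r / τ) := by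
      have h3 := mul_le_mul_of_nonneg_right h hep.le
      rw [mul_assoc, inv_mul_cancel₀ hep.ne', mul_one] at h3
      exact h3
    exact (le_abs_self _).trans h2
  have hcont : ContinuousOn (fun x => ω 0 x) (Icc 0 T) := by
    have : ContinuousOn ((fun p : ℝ × ℝ => ω p.1 p.2) ∘ (fun x : ℝ => ((0:ℝ), x)))
        (Icc 0 T) :=
      hωcont.comp (Continuous.continuousOn (by continuity))
        (fun x hx => ⟨le_rfl, hx.1, hx.2⟩)
    exact this
  -- base step: on an interval from 0 with small control
  have base : ∀ u, 0 ≤ u → u ≤ T → ω 0 u ≤ α →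
      G u - φ 0 u ≤ Real.exp (ω 0 u / τ) * (2 * G 0 + S) := by
    intro u hu huT huα
    have hEupos : (0:ℝ) < Real.exp (ω 0 u / τ) := Real.exp_pos _
    have hEu1 : (1:ℝ) ≤ Real.exp (ω 0 u / τ) := by
      calc (1:ℝ) = Real.exp 0 := Real.exp_zero.symm
      _ ≤ _ := Real.exp_le_exp.mpr (div_nonneg (hωnn 0 u le_rfl hu huT) hτpos.le)
    have hA : 0 ≤ G 0 + S * Real.exp (ω 0 u / τ) := by positivity
    have hc : ∀ r, (0:ℝ) ≤ r → r ≤ u → ∃ c, 0 ≤ c ∧ c ≤ 1/4 ∧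
        G r ≤ (G 0 + S * Real.exp (ω 0 u / τ)) + sSup (G '' Icc 0 r) * c := by
      intro r hr hru
      have hrT : r ≤ T := hru.trans huT
      have hωr0 : 0 ≤ ω 0 r := hωnn 0 r le_rfl hr hrT
      have hωrα : ω 0 r ≤ α := (hmono r u hr hru huT).trans huα
      have hωrL : ω 0 r ≤ L := hωrα.trans (min_le_left _ _)
      have h1 := hyp 0 r le_rfl hr hrT hωrL
      have h2 : φ 0 r ≤ S * Real.exp (ω 0 u / τ) := by
        refine (hφb r hr hrT).trans ?_
        have h4 : Real.exp (ω 0 r / τ) ≤ Real.exp (ω 0 u / τ) :=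
          Real.exp_le_exp.mpr (hdiv _ _ (hmono r u hr hru huT))
        exact mul_le_mul_of_nonneg_left h4 hS0
      exact ⟨ω 0 r ^ (1/κ), Real.rpow_nonneg hωr0 _, hsmall _ hωr0 hωrα, by linarith⟩
    have key := sup_fix G 0 u (G 0 + S * Real.exp (ω 0 u / τ)) (1/4) hu
      (by norm_num) (by norm_num) hA hG0 hc u hu le_rfl
    have hωuL : ω 0 u ≤ L := huα.trans (min_le_left _ _)
    have hu0 : 0 ≤ ω 0 u := hωnn 0 u le_rfl hu huT
    have h1 := hyp 0 u le_rfl hu huT hωuL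
    have hcu0 : 0 ≤ ω 0 u ^ (1/κ) := Real.rpow_nonneg hu0 _
    have hcu : ω 0 u ^ (1/κ) ≤ 1/4 := hsmall _ hu0 huα
    have h3 : sSup (G '' Icc 0 u) * ω 0 u ^ (1/κ) ≤
        ((G 0 + S * Real.exp (ω 0 u / τ)) / (1 - 1/4)) * (1/4) :=
      mul_le_mul key hcu hcu0 (div_nonneg hA (by norm_num))
    have h4 : ((G 0 + S * Real.exp (ω 0 u / τ)) / (1 - 1/4)) * (1/4)
        = (G 0 + S * Real.exp (ω 0 u / τ)) / 3 := by ring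
    nlinarith [mul_nonneg hG0 (sub_nonneg.mpr hEu1),
      mul_nonneg hS0 hEupos.le]
  -- main induction
  have main : ∀ n : ℕ, ∀ u, 0 ≤ u → u ≤ T → ω 0 u ≤ (n : ℝ) * α →
      G u - φ 0 u ≤ Real.exp (ω 0 u / τ) * (2 * G 0 + S) := by
    intro n
    induction n with
    | zero =>
      intro u hu huT hωu
      push_cast at hωu
      exact base u hu huT (by linarith)
    | succ n ih =>
      intro u hu huT hωu
      push_cast at hωu
      by_cases hc1 : ω 0 u ≤ (n : ℝ) * α
      · exact ih u hu huT hc1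
      · by_cases hc2 : ω 0 u ≤ α
        · exact base u hu huT hc2
        · push_neg at hc1 hc2
          have hmem : ω 0 u - α ∈ Icc (ω 0 0) (ω 0 u) := by
            rw [hω00]
            exact ⟨by linarith, by linarith⟩
          obtain ⟨s, hsIcc, hfs⟩ :=
            intermediate_value_Icc hu (hcont.mono (Icc_subset_Icc le_rfl huT)) hmem
          obtain ⟨hs0, hsu⟩ := hsIcc
          replace hfs : ω 0 s = ω 0 u - α := hfs
          have hsT : s ≤ T := hsu.trans huT
          have hρ : G s - φ 0 s ≤ Real.exp (ω 0 s / τ) * (2 * G 0 + S) :=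
            ih s hs0 hsT (by rw [hfs]; linarith)
          have hEupos : (0:ℝ) < Real.exp (ω 0 u / τ) := Real.exp_pos _
          have hEs : Real.exp (ω 0 s / τ) = Real.exp (ω 0 u / τ) / 2 := by
            rw [hfs, sub_div, Real.exp_sub, hexpα]
          have h2GS : (0:ℝ) ≤ 2 * G 0 + S := by linarith
          have hρ' : G s - φ 0 s ≤ Real.exp (ω 0 u / τ) / 2 * (2 * G 0 + S) := by
            rw [hEs] at hρ; exact hρ
          have hA : 0 ≤ Real.exp (ω 0 u / τ) / 2 * (2 * G 0 + S)
              + S * Real.exp (ω 0 u / τ) :=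
            add_nonneg (mul_nonneg (by positivity) h2GS)
              (mul_nonneg hS0 hEupos.le)
          have hGs : 0 ≤ G s := hG s hs0 hsT
          have hc : ∀ r, s ≤ r → r ≤ u → ∃ c, 0 ≤ c ∧ c ≤ 1/4 ∧
              G r ≤ (Real.exp (ω 0 u / τ) / 2 * (2 * G 0 + S)
                + S * Real.exp (ω 0 u / τ)) + sSup (G '' Icc s r) * c := by
            intro r hsr hru
            have hr0 : 0 ≤ r := hs0.trans hsr
            have hrT : r ≤ T := hru.trans huT
            have hωsr0 : 0 ≤ ω s r := hωnn s r hs0 hsr hrT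
            have hωsrα : ω s r ≤ α := by
              have h1 := hωsub s r hs0 hsr hrT
              have h2 := hmono r u hr0 hru huT
              rw [hfs] at h1
              linarith
            have hωsrL : ω s r ≤ L := hωsrα.trans (min_le_left _ _)
            have h1 := hyp s r hs0 hsr hrT hωsrL
            have h2 := hφ 0 s r le_rfl hs0 hsr hrT
            have h3 : φ 0 r ≤ S * Real.exp (ω 0 u / τ) := by
              refine (hφb r hr0 hrT).trans ?_
              have h4 : Real.exp (ω 0 r / τ) ≤ Real.exp (ω 0 u / τ) :=
                Real.exp_le_exp.mpr (hdiv _ _ (hmono r u hr0 hru huT))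
              exact mul_le_mul_of_nonneg_left h4 hS0
            exact ⟨ω s r ^ (1/κ), Real.rpow_nonneg hωsr0 _, hsmall _ hωsr0 hωsrα,
              by linarith⟩
          have key := sup_fix G s u (Real.exp (ω 0 u / τ) / 2 * (2 * G 0 + S)
              + S * Real.exp (ω 0 u / τ)) (1/4) hsu
            (by norm_num) (by norm_num) hA hGs hc u hsu le_rfl
          have hωsu0 : 0 ≤ ω s u := hωnn s u hs0 hsu huT
          have hωsuα : ω s u ≤ α := by
            have h1 := hωsub s u hs0 hsu huT
            rw [hfs] at h1
            linarith
          have h1 := hyp s u hs0 hsu huT (hωsuα.trans (min_le_left _ _))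
          have h2 := hφ 0 s u le_rfl hs0 hsu huT
          have hcu : ω s u ^ (1/κ) ≤ 1/4 := hsmall _ hωsu0 hωsuα
          have hcu0 : 0 ≤ ω s u ^ (1/κ) := Real.rpow_nonneg hωsu0 _
          have h3 : sSup (G '' Icc s u) * ω s u ^ (1/κ) ≤
              ((Real.exp (ω 0 u / τ) / 2 * (2 * G 0 + S)
                + S * Real.exp (ω 0 u / τ)) / (1 - 1/4)) * (1/4) :=
            mul_le_mul key hcu hcu0 (div_nonneg hA (by norm_num))
          have h4 : ((Real.exp (ω 0 u / τ) / 2 * (2 * G 0 + S)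
                + S * Real.exp (ω 0 u / τ)) / (1 - 1/4)) * (1/4)
              = (Real.exp (ω 0 u / τ) / 2 * (2 * G 0 + S)
                + S * Real.exp (ω 0 u / τ)) / 3 := by ring
          rw [h4] at h3
          have h5 : G u - φ 0 u ≤ Real.exp (ω 0 u / τ) / 2 * (2 * G 0 + S)
              + (Real.exp (ω 0 u / τ) / 2 * (2 * G 0 + S)
                + S * Real.exp (ω 0 u / τ)) / 3 := by linarith
          have h6 : 0 ≤ Real.exp (ω 0 u / τ) * G 0 := mul_nonneg hEupos.le hG0
          linarith
  -- conclusion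
  intro t ht htT
  obtain ⟨n, hn⟩ := exists_nat_ge (ω 0 T / α)
  have hωT : ω 0 T ≤ (n : ℝ) * α := by
    rw [div_le_iff₀ hαpos] at hn
    linarith
  have hωt : ω 0 t ≤ (n : ℝ) * α := (hmono t T ht htT le_rfl).trans hωT
  have hfin := main n t ht htT hωt
  have hφt := hφb t ht htT
  have hEt : Real.exp (ω 0 t / τ) ≤ Real.exp (ω 0 T / τ) :=
    Real.exp_le_exp.mpr (hdiv _ _ (hmono t T ht htT le_rfl))
  have hstep : Real.exp (ω 0 t / τ) * (2 * G 0 + 2 * S)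
      ≤ Real.exp (ω 0 T / τ) * (2 * G 0 + 2 * S) :=
    mul_le_mul_of_nonneg_right hEt (by linarith)
  linarith
end

section
/- Tensorized drift bound (core estimate of Lemma 4.2): Let d ≥ 1 and Ω := {(x,y) ∈ ℝ^d×ℝ^d : |x−y| ≤ 2}. There is a constant C, depending only on d, with the following property. Let u¹, u² ∈ L²(ℝ^d) and let f⁰, f¹, …, f^d and g⁰, g¹, …, g^d belong to L²(ℝ^d). Then for every bounded Lipschitz Φ : ℝ^d×ℝ^d → ℝ vanishing outside Ω: | ∫_{ℝ^d} u¹(x)·( ∫_{ℝ^d} ( f⁰(y)·Φ(x,y) + Σ_{i=1}^d f^i(y)·∂_{y_i}Φ(x,y) ) dy ) dx + ∫_{ℝ^d} u²(y)·( ∫_{ℝ^d} ( g⁰(x)·Φ(x,y) + Σ_{i=1}^d g^i(x)·∂_{x_i}Φ(x,y) ) dx ) dy | ≤ C·( ‖u¹‖_{L²}·(Σ_{γ=0}^d ‖f^γ‖²_{L²})^{1/2} + ‖u²‖_{L²}·(Σ_{γ=0}^d ‖g^γ‖²_{L²})^{1/2} )·( sup|Φ| + Lip(Φ) ), where ∂_{x_i}Φ,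 ∂_{y_i}Φ denote the almost-everywhere defined partial derivatives of the Lipschitz function Φ. -/
open MeasureTheory
open scoped ENNReal NNReal

namespace TensorDrift

variable {d : ℕ}

abbrev E (d : ℕ) : Type := EuclideanSpace ℝ (Fin d)

noncomputable def indΩ (d : ℕ) : E d × E d → ℝ≥0∞ :=
  {p : E d × E d | ‖p.1 - p.2‖ ≤ 2}.indicator 1

lemma indΩ_meas : Measurable (indΩ d) :=
  measurable_one.indicator
    ((isClosed_le ((continuous_fst.sub continuous_snd).norm) continuous_const).measurableSet)

lemma indΩ_of_mem {x y : E d} (h : ‖x - y‖ ≤ 2) : indΩ d (x, y) = 1 := by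
  have hmem : (x, y) ∈ {p : E d × E d | ‖p.1 - p.2‖ ≤ 2} := h
  simp [indΩ, Set.indicator_of_mem hmem]

lemma indΩ_of_not_mem {x y : E d} (h : ¬ ‖x - y‖ ≤ 2) : indΩ d (x, y) = 0 := by
  have hmem : (x, y) ∉ {p : E d × E d | ‖p.1 - p.2‖ ≤ 2} := h
  simp [indΩ, Set.indicator_of_notMem hmem]

lemma indΩ_sq (p : E d × E d) : indΩ d p * indΩ d p = indΩ d p := by
  rcases p with ⟨x, y⟩
  by_cases h : ‖x - y‖ ≤ 2
  · simp [indΩ_of_mem h]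
  · simp [indΩ_of_not_mem h]

lemma indΩ_rpow (p : E d × E d) : indΩ d p ^ (2:ℝ) = indΩ d p := by
  rcases p with ⟨x, y⟩
  by_cases h : ‖x - y‖ ≤ 2
  · simp [indΩ_of_mem h]
  · simp [indΩ_of_not_mem h]

lemma indΩ_sect1 (x : E d) :
    ∫⁻ y, indΩ d (x, y) = volume (Metric.closedBall (0 : E d) 2) := by
  have h1 : (fun y => indΩ d (x, y)) =
      (Metric.closedBall x 2).indicator (1 : E d → ℝ≥0∞) := by
    funext y
    have hiff : ‖x - y‖ ≤ 2 ↔ y ∈ Metric.closedBall x 2 := by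
      simp [Metric.mem_closedBall, dist_eq_norm, norm_sub_rev]
    by_cases h : y ∈ Metric.closedBall x 2
    · simp [indΩ_of_mem (hiff.2 h), Set.indicator_of_mem h]
    · simp [indΩ_of_not_mem (fun hh => h (hiff.1 hh)), Set.indicator_of_notMem h]
  rw [h1, lintegral_indicator_one measurableSet_closedBall]
  exact Measure.addHaar_closedBall_center volume x 2

lemma indΩ_sect2 (y : E d) :
    ∫⁻ x, indΩ d (x, y) = volume (Metric.closedBall (0 : E d) 2) := by
  have h1 : (fun x => indΩ d (x, y)) =
      (Metric.closedBall y 2).indicator (1 : E d → ℝ≥0∞) := by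
    funext x
    have hiff : ‖x - y‖ ≤ 2 ↔ x ∈ Metric.closedBall y 2 := by
      simp [Metric.mem_closedBall, dist_eq_norm]
    by_cases h : x ∈ Metric.closedBall y 2
    · simp [indΩ_of_mem (hiff.2 h), Set.indicator_of_mem h]
    · simp [indΩ_of_not_mem (fun hh => h (hiff.1 hh)), Set.indicator_of_notMem h]
  rw [h1, lintegral_indicator_one measurableSet_closedBall]
  exact Measure.addHaar_closedBall_center volume y 2


lemma aux_bound (d : ℕ) (u : E d → ℝ) (f : Fin (d + 1) → E d → ℝ)
    (hu : MemLp u 2 volume) (hf : ∀ γ, MemLp (f γ) 2 volume)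
    (φ : Fin (d + 1) → E d → E d → ℝ)
    (B : ℝ) (hB : 0 ≤ B)
    (hφ : ∀ γ x y, |φ γ x y| ≤ B)
    (hφ0 : ∀ γ x y, ¬ ‖x - y‖ ≤ 2 → φ γ x y = 0) :
    |∫ x, u x * ∫ y, ∑ γ, f γ y * φ γ x y| ≤
      (volume (Metric.closedBall (0 : E d) 2)).toReal * Real.sqrt (d + 1) *
        ((eLpNorm u 2 volume).toReal *
          Real.sqrt (∑ γ, (eLpNorm (f γ) 2 volume).toReal ^ 2)) * B := by
  classical
  set Vb : ℝ≥0∞ := volume (Metric.closedBall (0 : E d) 2) with hVb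
  have hVb_ne_top : Vb ≠ ∞ := (isCompact_closedBall _ _).measure_lt_top.ne
  have hVb_ne_zero : Vb ≠ 0 := by
    have h1 : (0:ℝ≥0∞) < volume (Metric.ball (0 : E d) 2) :=
      Metric.measure_ball_pos _ _ (by norm_num)
    have h2 : volume (Metric.ball (0 : E d) 2) ≤ Vb :=
      measure_mono Metric.ball_subset_closedBall
    exact fun h => absurd (lt_of_lt_of_le h1 h2) (by rw [h]; simp)
  set S : E d → ℝ := fun y => ∑ γ, ‖f γ y‖ with hS
  have hS_nonneg : ∀ y, 0 ≤ S y := fun y => Finset.sum_nonneg fun γ _ => norm_nonneg _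
  set oB : ℝ≥0∞ := ENNReal.ofReal B with hoB
  have hoB_ne_top : oB ≠ ∞ := ENNReal.ofReal_ne_top
  set oS : E d → ℝ≥0∞ := fun y => ENNReal.ofReal (S y) with hoS
  -- kernel bound
  have hker : ∀ x y : E d,
      (‖∑ γ, f γ y * φ γ x y‖₊ : ℝ≥0∞) ≤ oB * oS y * indΩ d (x, y) := by
    intro x y
    by_cases h : ‖x - y‖ ≤ 2
    · rw [indΩ_of_mem h, mul_one, hoB, hoS, ← ENNReal.ofReal_mul hB,
        ← enorm_eq_nnnorm, Real.enorm_eq_ofReal_abs]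
      apply ENNReal.ofReal_le_ofReal
      calc |∑ γ, f γ y * φ γ x y| ≤ ∑ γ, |f γ y * φ γ x y| :=
            Finset.abs_sum_le_sum_abs _ _
        _ = ∑ γ, |f γ y| * |φ γ x y| := by simp [abs_mul]
        _ ≤ ∑ γ, |f γ y| * B := Finset.sum_le_sum fun γ _ =>
            mul_le_mul_of_nonneg_left (hφ γ x y) (abs_nonneg _)
        _ = B * S y := by
            rw [← Finset.sum_mul, hS]; simp [Real.norm_eq_abs, mul_comm]
    · have hz : ∑ γ, f γ y * φ γ x y = 0 :=
        Finset.sum_eq_zero fun γ _ => by rw [hφ0 γ x y h, mul_zero]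
      simp [hz]
  -- measurability
  have hum : AEMeasurable (fun p : E d × E d => (‖u p.1‖₊ : ℝ≥0∞))
      ((volume : Measure (E d)).prod volume) := by
    exact (hu.1.enorm).comp_quasiMeasurePreserving Measure.quasiMeasurePreserving_fst
  have hSm : AEMeasurable S volume := by
    apply Finset.aemeasurable_fun_sum
    intro γ _
    exact (hf γ).1.norm.aemeasurable
  have hoSm : AEMeasurable (fun p : E d × E d => oS p.2)
      ((volume : Measure (E d)).prod volume) := by
    exact (ENNReal.measurable_ofReal.comp_aemeasurable
      hSm).comp_quasiMeasurePreserving Measure.quasiMeasurePreserving_snd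
  set G1 : E d × E d → ℝ≥0∞ := fun p => (‖u p.1‖₊ : ℝ≥0∞) * indΩ d p with hG1_def
  set G2 : E d × E d → ℝ≥0∞ := fun p => oB * oS p.2 * indΩ d p with hG2_def
  have hG1m : AEMeasurable G1 ((volume : Measure (E d)).prod volume) :=
    hum.mul indΩ_meas.aemeasurable
  have hG2m : AEMeasurable G2 ((volume : Measure (E d)).prod volume) :=
    (aemeasurable_const.mul hoSm).mul indΩ_meas.aemeasurable
  have hGm : AEMeasurable (fun p => G1 p * G2 p) ((volume : Measure (E d)).prod volume) :=
    hG1m.mul hG2m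
  set F : E d → ℝ := fun x => ∫ y, ∑ γ, f γ y * φ γ x y with hF
  have step1 : |∫ x, u x * F x| ≤ (∫⁻ x, (‖u x‖₊ : ℝ≥0∞) * ‖F x‖₊).toReal := by
    have := norm_integral_le_lintegral_norm (μ := (volume : Measure (E d)))
      (fun x => u x * F x)
    simp only [Real.norm_eq_abs, abs_mul, ENNReal.ofReal_mul (abs_nonneg _),
      ← Real.enorm_eq_ofReal_abs] at this
    exact this
  have step2 : (∫⁻ x, (‖u x‖₊ : ℝ≥0∞) * ‖F x‖₊) ≤
      ∫⁻ x, ∫⁻ y, G1 (x, y) * G2 (x, y) := by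
    apply lintegral_mono
    intro x
    have hFb : (‖F x‖₊ : ℝ≥0∞) ≤ ∫⁻ y, oB * oS y * indΩ d (x, y) :=
      le_trans (enorm_integral_le_lintegral_enorm _) (lintegral_mono fun y => hker x y)
    calc (‖u x‖₊ : ℝ≥0∞) * ‖F x‖₊
        ≤ (‖u x‖₊ : ℝ≥0∞) * ∫⁻ y, oB * oS y * indΩ d (x, y) := mul_le_mul_right hFb _
      _ = ∫⁻ y, (‖u x‖₊ : ℝ≥0∞) * (oB * oS y * indΩ d (x, y)) :=
          (lintegral_const_mul' _ _ ENNReal.coe_ne_top).symm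
      _ = ∫⁻ y, G1 (x, y) * G2 (x, y) := by
          apply lintegral_congr; intro y
          simp only [hG1_def, hG2_def]
          calc (‖u x‖₊ : ℝ≥0∞) * (oB * oS y * indΩ d (x, y))
              = (‖u x‖₊ : ℝ≥0∞) * (oB * oS y * (indΩ d (x,y) * indΩ d (x,y))) := by
                rw [indΩ_sq]
            _ = (‖u x‖₊ : ℝ≥0∞) * indΩ d (x, y) * (oB * oS y * indΩ d (x, y)) := by ring
  have step4 : ∫⁻ x, ∫⁻ y, G1 (x, y) * G2 (x, y)
      = ∫⁻ p, G1 p * G2 p ∂((volume : Measure (E d)).prod volume) :=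
    (lintegral_prod _ hGm).symm
  have hconj : (2:ℝ).HolderConjugate 2 := by constructor <;> norm_num
  have step5 : ∫⁻ p, G1 p * G2 p ∂((volume : Measure (E d)).prod volume) ≤
      (∫⁻ p, G1 p ^ (2:ℝ) ∂((volume : Measure (E d)).prod volume)) ^ (1/2:ℝ) *
      (∫⁻ p, G2 p ^ (2:ℝ) ∂((volume : Measure (E d)).prod volume)) ^ (1/2:ℝ) :=
    ENNReal.lintegral_mul_le_Lp_mul_Lq _ hconj hG1m hG2m
  set A1 : ℝ≥0∞ := ∫⁻ x, (‖u x‖₊ : ℝ≥0∞) ^ (2:ℝ) with hA1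
  set A2 : ℝ≥0∞ := ∫⁻ y, oS y ^ (2:ℝ) with hA2
  have step6 : ∫⁻ p, G1 p ^ (2:ℝ) ∂((volume : Measure (E d)).prod volume) = A1 * Vb := by
    have hm : AEMeasurable (fun p => G1 p ^ (2:ℝ)) ((volume : Measure (E d)).prod volume) :=
      hG1m.pow aemeasurable_const
    rw [lintegral_prod _ hm]
    have hx : ∀ x : E d, ∫⁻ y, G1 (x, y) ^ (2:ℝ) = (‖u x‖₊ : ℝ≥0∞) ^ (2:ℝ) * Vb := by
      intro x
      have heq : ∀ y : E d, G1 (x, y) ^ (2:ℝ)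
          = (‖u x‖₊ : ℝ≥0∞) ^ (2:ℝ) * indΩ d (x, y) := by
        intro y
        simp only [hG1_def]
        rw [ENNReal.mul_rpow_of_nonneg _ _ (by norm_num : (0:ℝ) ≤ 2), indΩ_rpow]
      simp only [heq]
      rw [lintegral_const_mul' _ _
        (ENNReal.rpow_ne_top_of_nonneg (by norm_num) ENNReal.coe_ne_top), indΩ_sect1]
    simp only [hx]
    rw [lintegral_mul_const' _ _ hVb_ne_top]
  have step7 : ∫⁻ p, G2 p ^ (2:ℝ) ∂((volume : Measure (E d)).prod volume)
      = oB ^ (2:ℝ) * A2 * Vb := by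
    have hm : AEMeasurable (fun p => G2 p ^ (2:ℝ)) ((volume : Measure (E d)).prod volume) :=
      hG2m.pow aemeasurable_const
    rw [lintegral_prod_symm _ hm]
    have hy : ∀ y : E d, ∫⁻ x, G2 (x, y) ^ (2:ℝ) = oB ^ (2:ℝ) * oS y ^ (2:ℝ) * Vb := by
      intro y
      have heq : ∀ x : E d, G2 (x, y) ^ (2:ℝ)
          = oB ^ (2:ℝ) * oS y ^ (2:ℝ) * indΩ d (x, y) := by
        intro x
        simp only [hG2_def]
        rw [ENNReal.mul_rpow_of_nonneg _ _ (by norm_num : (0:ℝ) ≤ 2), indΩ_rpow,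
          ENNReal.mul_rpow_of_nonneg _ _ (by norm_num : (0:ℝ) ≤ 2)]
      simp only [heq]
      rw [lintegral_const_mul' _ _
        (ENNReal.mul_ne_top (ENNReal.rpow_ne_top_of_nonneg (by norm_num) hoB_ne_top)
          (ENNReal.rpow_ne_top_of_nonneg (by norm_num) ENNReal.ofReal_ne_top)), indΩ_sect2]
    simp only [hy]
    rw [lintegral_mul_const' _ _ hVb_ne_top,
      lintegral_const_mul' _ _ (ENNReal.rpow_ne_top_of_nonneg (by norm_num) hoB_ne_top)]
  -- identify with eLpNorms
  have hA1_half : A1 ^ (1/2:ℝ) = eLpNorm u 2 volume := by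
    rw [eLpNorm_eq_lintegral_rpow_enorm_toReal two_ne_zero ENNReal.ofNat_ne_top]
    norm_num [hA1, enorm_eq_nnnorm]
  have hA2_half : A2 ^ (1/2:ℝ) ≤ ∑ γ, eLpNorm (f γ) 2 volume := by
    have h1 : A2 ^ (1/2:ℝ) = eLpNorm S 2 volume := by
      rw [eLpNorm_eq_lintegral_rpow_enorm_toReal two_ne_zero ENNReal.ofNat_ne_top]
      have : ∀ y, oS y = (‖S y‖₊ : ℝ≥0∞) := fun y =>
        (Real.enorm_eq_ofReal (hS_nonneg y)).symm
      norm_num [hA2, this, enorm_eq_nnnorm]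
    rw [h1]
    have h2 : S = ∑ γ : Fin (d+1), fun y => ‖f γ y‖ := by
      funext y; rw [hS]; simp
    rw [h2]
    refine le_trans (eLpNorm_sum_le (fun γ _ => (hf γ).1.norm) one_le_two) ?_
    exact le_of_eq (Finset.sum_congr rfl fun γ _ => eLpNorm_norm _)
  -- assemble in ℝ≥0∞
  set R : ℝ≥0∞ := Vb * oB * (eLpNorm u 2 volume * ∑ γ, eLpNorm (f γ) 2 volume) with hR
  have hsum_ne_top : (∑ γ, eLpNorm (f γ) 2 volume) ≠ ∞ := by
    refine ne_of_lt ?_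
    exact ENNReal.sum_lt_top.2 fun γ _ => (hf γ).2
  have hR_ne_top : R ≠ ∞ :=
    ENNReal.mul_ne_top (ENNReal.mul_ne_top hVb_ne_top hoB_ne_top)
      (ENNReal.mul_ne_top hu.2.ne hsum_ne_top)
  have hfinal1 : (A1 * Vb) ^ (1/2:ℝ) * (oB ^ (2:ℝ) * A2 * Vb) ^ (1/2:ℝ)
      = Vb * oB * (A1 ^ (1/2:ℝ) * A2 ^ (1/2:ℝ)) := by
    rw [ENNReal.mul_rpow_of_nonneg _ _ (by norm_num : (0:ℝ) ≤ 1/2),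
        ENNReal.mul_rpow_of_nonneg _ _ (by norm_num : (0:ℝ) ≤ 1/2),
        ENNReal.mul_rpow_of_nonneg _ _ (by norm_num : (0:ℝ) ≤ 1/2),
        ← ENNReal.rpow_mul]
    have h2 : oB ^ ((2:ℝ) * (1/2:ℝ)) = oB := by norm_num
    have hv : Vb = Vb ^ (1/2:ℝ) * Vb ^ (1/2:ℝ) := by
      rw [← ENNReal.rpow_add _ _ hVb_ne_zero hVb_ne_top]; norm_num
    rw [h2]
    nth_rewrite 3 [hv]
    ring
  have hlin : (∫⁻ x, (‖u x‖₊ : ℝ≥0∞) * ‖F x‖₊) ≤ R := by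
    refine le_trans step2 ?_
    rw [step4]
    refine le_trans step5 ?_
    rw [step6, step7, hfinal1, hA1_half]
    exact mul_le_mul_right (mul_le_mul_right hA2_half _) _
  have htoReal : R.toReal = Vb.toReal * B *
      ((eLpNorm u 2 volume).toReal * ∑ γ, (eLpNorm (f γ) 2 volume).toReal) := by
    rw [hR, ENNReal.toReal_mul, ENNReal.toReal_mul, ENNReal.toReal_mul, hoB,
      ENNReal.toReal_ofReal hB, ENNReal.toReal_sum fun γ _ => (hf γ).2.ne]
  have hsum_le : ∑ γ, (eLpNorm (f γ) 2 volume).toReal ≤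
      Real.sqrt (d+1) * Real.sqrt (∑ γ, (eLpNorm (f γ) 2 volume).toReal ^ 2) := by
    set a : Fin (d+1) → ℝ := fun γ => (eLpNorm (f γ) 2 volume).toReal with ha
    have h1 : (∑ γ, a γ)^2 ≤ (d+1 : ℝ) * ∑ γ, a γ^2 := by
      have := sq_sum_le_card_mul_sum_sq (s := (Finset.univ : Finset (Fin (d+1)))) (f := a)
      simpa using this
    calc ∑ γ, a γ = Real.sqrt ((∑ γ, a γ)^2) :=
          (Real.sqrt_sq (Finset.sum_nonneg fun γ _ => ENNReal.toReal_nonneg)).symm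
      _ ≤ Real.sqrt ((d+1 : ℝ) * ∑ γ, a γ^2) := Real.sqrt_le_sqrt h1
      _ = Real.sqrt (d+1) * Real.sqrt (∑ γ, a γ^2) := Real.sqrt_mul (by positivity) _
  calc |∫ x, u x * ∫ y, ∑ γ, f γ y * φ γ x y| = |∫ x, u x * F x| := rfl
    _ ≤ (∫⁻ x, (‖u x‖₊ : ℝ≥0∞) * ‖F x‖₊).toReal := step1
    _ ≤ R.toReal := ENNReal.toReal_mono hR_ne_top hlin
    _ = Vb.toReal * B *
        ((eLpNorm u 2 volume).toReal * ∑ γ, (eLpNorm (f γ) 2 volume).toReal) := htoReal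
    _ ≤ Vb.toReal * B * ((eLpNorm u 2 volume).toReal *
        (Real.sqrt (d+1) * Real.sqrt (∑ γ, (eLpNorm (f γ) 2 volume).toReal ^ 2))) := by
        have hVbR : (0:ℝ) ≤ Vb.toReal := ENNReal.toReal_nonneg
        have heu : (0:ℝ) ≤ (eLpNorm u 2 volume).toReal := ENNReal.toReal_nonneg
        exact mul_le_mul_of_nonneg_left
          (mul_le_mul_of_nonneg_left hsum_le heu) (by positivity)
    _ = Vb.toReal * Real.sqrt (d + 1) *
        ((eLpNorm u 2 volume).toReal *
          Real.sqrt (∑ γ, (eLpNorm (f γ) 2 volume).toReal ^ 2)) * B := by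
        push_cast
        ring

end TensorDrift

open TensorDrift

/-- **Tensorized drift bound** (core estimate of Lemma 4.2).  There is a
constant `C`, depending only on `d`, such that for all `u¹, u² ∈ L²(ℝ^d)`,
all `f⁰,…,f^d, g⁰,…,g^d ∈ L²(ℝ^d)` and every bounded Lipschitz `Φ`
vanishing outside the strip `Ω = {|x−y| ≤ 2}`,
`|∫ u¹(x)(∫ (f⁰Φ + Σ f^i ∂_{y_i}Φ) dy) dx + ∫ u²(y)(∫ (g⁰Φ + Σ g^i ∂_{x_i}Φ) dx) dy|
 ≤ C(‖u¹‖(Σ‖f^γ‖²)^{1/2} + ‖u²‖(Σ‖g^γ‖²)^{1/2})(sup|Φ| + Lip(Φ))`. -/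
theorem tensorized_drift_bound (d : ℕ) (hd : 1 ≤ d) :
    ∃ C : ℝ, 0 < C ∧
      ∀ (u₁ u₂ : EuclideanSpace ℝ (Fin d) → ℝ)
        (f g : Fin (d + 1) → EuclideanSpace ℝ (Fin d) → ℝ),
        MemLp u₁ 2 volume → MemLp u₂ 2 volume →
        (∀ γ, MemLp (f γ) 2 volume) → (∀ γ, MemLp (g γ) 2 volume) →
        ∀ (Φ : EuclideanSpace ℝ (Fin d) × EuclideanSpace ℝ (Fin d) → ℝ)
          (K : ℝ≥0) (MΦ : ℝ),
          LipschitzWith K Φ → (∀ p, |Φ p| ≤ MΦ) →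
          (∀ p : EuclideanSpace ℝ (Fin d) × EuclideanSpace ℝ (Fin d),
            ¬ ‖p.1 - p.2‖ ≤ 2 → Φ p = 0) →
          |(∫ x, u₁ x * ∫ y, (f 0 y * Φ (x, y) +
              ∑ i : Fin d, f i.succ y *
                fderiv ℝ Φ (x, y) (0, EuclideanSpace.single i 1))) +
            (∫ y, u₂ y * ∫ x, (g 0 x * Φ (x, y) +
              ∑ i : Fin d, g i.succ x *
                fderiv ℝ Φ (x, y) (EuclideanSpace.single i 1, 0)))| ≤
            C * ((eLpNorm u₁ 2 volume).toReal *
                    Real.sqrt (∑ γ, (eLpNorm (f γ) 2 volume).toReal ^ 2) +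
                  (eLpNorm u₂ 2 volume).toReal *
                    Real.sqrt (∑ γ, (eLpNorm (g γ) 2 volume).toReal ^ 2)) *
              (MΦ + K) := by
  classical
  set Vb : ℝ≥0∞ := volume (Metric.closedBall (0 : E d) 2) with hVb
  have hVb_ne_top : Vb ≠ ∞ := (isCompact_closedBall _ _).measure_lt_top.ne
  have hVb_ne_zero : Vb ≠ 0 := by
    have h1 : (0:ℝ≥0∞) < volume (Metric.ball (0 : E d) 2) :=
      Metric.measure_ball_pos _ _ (by norm_num)
    have h2 : volume (Metric.ball (0 : E d) 2) ≤ Vb :=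
      measure_mono Metric.ball_subset_closedBall
    exact fun h => absurd (lt_of_lt_of_le h1 h2) (by rw [h]; simp)
  refine ⟨Vb.toReal * Real.sqrt (d + 1), ?_, ?_⟩
  · have : 0 < Vb.toReal := ENNReal.toReal_pos hVb_ne_zero hVb_ne_top
    positivity
  intro u₁ u₂ f g hu₁ hu₂ hf hg Φ K MΦ hK hM hΦ0
  have hM0 : 0 ≤ MΦ := le_trans (abs_nonneg _) (hM (0, 0))
  have hB : (0:ℝ) ≤ MΦ + K := by positivity
  -- fderiv vanishes off the strip
  have hfd0 : ∀ p : E d × E d, ¬ ‖p.1 - p.2‖ ≤ 2 → fderiv ℝ Φ p = 0 := by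
    intro p hp
    have hopen : IsOpen {q : E d × E d | ¬ ‖q.1 - q.2‖ ≤ 2} := by
      have he : {q : E d × E d | ¬ ‖q.1 - q.2‖ ≤ 2} = {q | 2 < ‖q.1 - q.2‖} := by
        ext q; simp [not_le]
      rw [he]
      exact isOpen_lt continuous_const ((continuous_fst.sub continuous_snd).norm)
    have hev : Φ =ᶠ[nhds p] (fun _ => (0:ℝ)) :=
      Filter.eventually_of_mem (hopen.mem_nhds hp) (fun q hq => hΦ0 q hq)
    rw [hev.fderiv_eq]
    exact fderiv_const_apply 0
  -- fderiv bound
  have hfd_bound : ∀ (p : E d × E d) (v : E d × E d), ‖v‖ ≤ 1 →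
      |fderiv ℝ Φ p v| ≤ K := by
    intro p v hv
    calc |fderiv ℝ Φ p v| = ‖fderiv ℝ Φ p v‖ := (Real.norm_eq_abs _).symm
      _ ≤ ‖fderiv ℝ Φ p‖ * ‖v‖ := (fderiv ℝ Φ p).le_opNorm v
      _ ≤ K * 1 := mul_le_mul (norm_fderiv_le_of_lipschitz ℝ hK) hv (norm_nonneg _) K.2
      _ = K := mul_one _
  have hv1 : ∀ i : Fin d, ‖((0, EuclideanSpace.single i (1:ℝ)) : E d × E d)‖ ≤ 1 := by
    intro i
    rw [Prod.norm_def]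
    simp [EuclideanSpace.norm_single]
  have hv2 : ∀ i : Fin d, ‖((EuclideanSpace.single i (1:ℝ), 0) : E d × E d)‖ ≤ 1 := by
    intro i
    rw [Prod.norm_def]
    simp [EuclideanSpace.norm_single]
  -- the two kernels
  set φ : Fin (d+1) → E d → E d → ℝ := fun γ x y =>
    Fin.cases (Φ (x, y)) (fun i => fderiv ℝ Φ (x, y) (0, EuclideanSpace.single i 1)) γ
    with hφdef
  set ψ : Fin (d+1) → E d → E d → ℝ := fun γ a b =>
    Fin.cases (Φ (b, a)) (fun i => fderiv ℝ Φ (b, a) (EuclideanSpace.single i 1, 0)) γ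
    with hψdef
  have hφb : ∀ γ x y, |φ γ x y| ≤ MΦ + K := by
    intro γ x y
    refine Fin.cases ?_ ?_ γ
    · simpa [hφdef] using le_trans (hM (x, y)) (le_add_of_nonneg_right K.coe_nonneg)
    · intro i
      simpa [hφdef] using le_trans (hfd_bound (x, y) _ (hv1 i))
        (le_add_of_nonneg_left hM0)
  have hψb : ∀ γ a b, |ψ γ a b| ≤ MΦ + K := by
    intro γ a b
    refine Fin.cases ?_ ?_ γ
    · simpa [hψdef] using le_trans (hM (b, a)) (le_add_of_nonneg_right K.coe_nonneg)
    · intro i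
      simpa [hψdef] using le_trans (hfd_bound (b, a) _ (hv2 i))
        (le_add_of_nonneg_left hM0)
  have hφ00 : ∀ γ x y, ¬ ‖x - y‖ ≤ 2 → φ γ x y = 0 := by
    intro γ x y h
    refine Fin.cases ?_ ?_ γ
    · simpa [hφdef] using hΦ0 (x, y) h
    · intro i
      have := hfd0 (x, y) h
      simp [hφdef, this]
  have hψ00 : ∀ γ a b, ¬ ‖a - b‖ ≤ 2 → ψ γ a b = 0 := by
    intro γ a b h
    have h' : ¬ ‖b - a‖ ≤ 2 := by rwa [norm_sub_rev]
    refine Fin.cases ?_ ?_ γ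
    · simpa [hψdef] using hΦ0 (b, a) h'
    · intro i
      have := hfd0 (b, a) h'
      simp [hψdef, this]
  -- rewrite the two inner sums
  have hrw1 : (∫ x, u₁ x * ∫ y, (f 0 y * Φ (x, y) +
      ∑ i : Fin d, f i.succ y * fderiv ℝ Φ (x, y) (0, EuclideanSpace.single i 1)))
      = ∫ x, u₁ x * ∫ y, ∑ γ, f γ y * φ γ x y := by
    congr 1; funext x; congr 1; congr 1; funext y
    rw [Fin.sum_univ_succ]
    simp [hφdef]
  have hrw2 : (∫ y, u₂ y * ∫ x, (g 0 x * Φ (x, y) +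
      ∑ i : Fin d, g i.succ x * fderiv ℝ Φ (x, y) (EuclideanSpace.single i 1, 0)))
      = ∫ a, u₂ a * ∫ b, ∑ γ, g γ b * ψ γ a b := by
    congr 1; funext a; congr 1; congr 1; funext b
    rw [Fin.sum_univ_succ]
    simp [hψdef]
  rw [hrw1, hrw2]
  have h1 := aux_bound d u₁ f hu₁ hf φ (MΦ + K) hB hφb hφ00
  have h2 := aux_bound d u₂ g hu₂ hg ψ (MΦ + K) hB hψb hψ00
  calc |(∫ x, u₁ x * ∫ y, ∑ γ, f γ y * φ γ x y) +
        (∫ a, u₂ a * ∫ b, ∑ γ, g γ b * ψ γ a b)|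
      ≤ |∫ x, u₁ x * ∫ y, ∑ γ, f γ y * φ γ x y| +
        |∫ a, u₂ a * ∫ b, ∑ γ, g γ b * ψ γ a b| := abs_add_le _ _
    _ ≤ Vb.toReal * Real.sqrt (d + 1) *
          ((eLpNorm u₁ 2 volume).toReal *
            Real.sqrt (∑ γ, (eLpNorm (f γ) 2 volume).toReal ^ 2)) * (MΦ + K) +
        Vb.toReal * Real.sqrt (d + 1) *
          ((eLpNorm u₂ 2 volume).toReal *
            Real.sqrt (∑ γ, (eLpNorm (g γ) 2 volume).toReal ^ 2)) * (MΦ + K) :=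
        add_le_add h1 h2
    _ = Vb.toReal * Real.sqrt (d + 1) *
          ((eLpNorm u₁ 2 volume).toReal *
              Real.sqrt (∑ γ, (eLpNorm (f γ) 2 volume).toReal ^ 2) +
            (eLpNorm u₂ 2 volume).toReal *
              Real.sqrt (∑ γ, (eLpNorm (g γ) 2 volume).toReal ^ 2)) * (MΦ + K) := by
        push_cast
        ring
end
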